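/- Let f : [0,1] → [0,1] be a homeomorphism with NW(f) = Fix(f) = {0, 1}, and let k ≥ 1. Let f^{×k} : [0,1]^k → [0,1]^k denote the k-fold product map f^{×k}(x_1,…,x_k) = (f(x_1),…,f(x_k)), and let Ã(k) := {(x_1,…,x_k) ∈ [0,1]^k : x_1 < x_2 < … < x_k}. Then h_pol(f^{×k}; Ã(k)) = k. -/

import Mathlib

open Filter Topology TopologicalSpace Set
open scoped ENNReal

/-- The dynamic distance `d_n^f(x,y) = max_{0 ≤ k ≤ n-1} d(f^k x, f^k y)`. -/
noncomputable def dynDist {X : Type*} [MetricSpace X] (f : X → X) (n : ℕ) (x y : X) : ℝ :=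
  ((Finset.range n).sup fun k => nndist (f^[k] x) (f^[k] y) : NNReal)

/-- A finite set `E` is `(n,ε)`-separated for `f`. -/
def IsDynSeparated {X : Type*} [MetricSpace X] (f : X → X) (n : ℕ) (ε : ℝ) (E : Finset X) :
    Prop :=
  ∀ x ∈ E, ∀ y ∈ E, x ≠ y → ε ≤ dynDist f n x y

/-- `S(n,ε;Y)`: the maximal cardinality of an `(n,ε)`-separated subset of `Y`. -/
noncomputable def maxSep {X : Type*} [MetricSpace X] (f : X → X) (Y : Set X) (n : ℕ) (ε : ℝ) :
    ℕ :=
  sSup {m : ℕ | ∃ E : Finset X, ↑E ⊆ Y ∧ E.card = m ∧ IsDynSeparated f n ε E}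

/-- The polynomial entropy `h_pol(f;Y)`.  Since `ε ↦ S(n,ε;Y)` is nonincreasing, the limit as
`ε → 0` of the `limsup` coincides with the supremum over `ε > 0`. -/
noncomputable def polEnt {X : Type*} [MetricSpace X] (f : X → X) (Y : Set X) : ℝ≥0∞ :=
  ⨆ (ε : ℝ) (_ : 0 < ε),
    Filter.atTop.limsup fun n : ℕ =>
      ENNReal.ofReal (Real.log (maxSep f Y n ε) / Real.log n)

/-- The set of non-wandering points of `f`. -/
def nonWandering {X : Type*} [TopologicalSpace X] (f : X → X) : Set X :=
  {p | ∀ U ∈ nhds p, ∃ n : ℕ, 1 ≤ n ∧ (f^[n] '' U ∩ U).Nonempty}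

/-- The induced map `2^f` on the hyperspace of nonempty closed (= compact) subsets of a
compact metric space. -/
noncomputable def induced2 {X : Type*} [TopologicalSpace X] (f : X → X) (hf : Continuous f) :
    NonemptyCompacts X → NonemptyCompacts X :=
  fun A => ⟨⟨f '' A, A.isCompact.image hf⟩, A.nonempty.image f⟩

/-- The hyperspace `C(X)` of subcontinua (nonempty closed connected subsets) of `X`. -/
abbrev Subcontinua (X : Type*) [TopologicalSpace X] :=
  {A : NonemptyCompacts X // IsConnected (A : Set X)}

/-- The induced map `C(f)` on the hyperspace of subcontinua. -/
noncomputable def inducedC {X : Type*} [TopologicalSpace X] (f : X → X) (hf : Continuous f) :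
    Subcontinua X → Subcontinua X :=
  fun A => ⟨induced2 f hf A.1, A.2.image f hf.continuousOn⟩

/-- The `k`-fold symmetric product `X^{*k}`: nonempty subsets of `X` with at most `k` points. -/
abbrev SymProd (X : Type*) [TopologicalSpace X] (k : ℕ) :=
  {A : NonemptyCompacts X // (A : Set X).Finite ∧ (A : Set X).ncard ≤ k}

/-- The induced map `f^{*k}` on the `k`-fold symmetric product. -/
noncomputable def inducedSym {X : Type*} [TopologicalSpace X] (f : X → X) (hf : Continuous f)
    (k : ℕ) : SymProd X k → SymProd X k :=
  fun A => ⟨induced2 f hf A.1, A.2.1.image f, le_trans (Set.ncard_image_le A.2.1) A.2.2⟩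

/-- Sets `U 0, …, U (L-1)` are mutually singular for `f`. -/
def MutuallySingularSets {X : Type*} [TopologicalSpace X] (f : X → X) {L : ℕ}
    (U : Fin L → Set X) : Prop :=
  ∀ M : ℕ, ∃ x : X, ∃ n : Fin L → ℕ, (∀ j, 1 ≤ n j ∧ f^[n j] x ∈ U j) ∧
    ∀ i j, i ≠ j → (M : ℤ) < |(n i : ℤ) - (n j : ℤ)|

/-- A finite set `S ⊆ X \ NW(f)` is singular: it consists of mutually singular points, i.e.
every family of respective neighbourhoods of its points is mutually singular. -/
def IsSingularSet {X : Type*} [TopologicalSpace X] (f : X → X) (S : Set X) : Prop :=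
  S.Finite ∧ (∀ x ∈ S, x ∉ nonWandering f) ∧
  ∀ (L : ℕ) (x : Fin L → X), Function.Injective x → Set.range x = S →
    ∀ U : Fin L → Set X, (∀ j, U j ∈ nhds (x j)) → MutuallySingularSets f U

/-- The set of codings of length-`n` orbit segments of points of `Y` relative to the family
`F`, where the letter `none` stands for `Y_∞ = Y \ ⋃ F`. -/
def codings {X : Type*} (f : X → X) {L : ℕ} (F : Fin L → Set X) (Y : Set X) (n : ℕ) :
    Set (Fin n → Option (Fin L)) :=
  {w | ∃ x ∈ Y, ∀ j : Fin n, match w j with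
    | some i => f^[(j : ℕ)] x ∈ F i
    | none => f^[(j : ℕ)] x ∈ Y \ ⋃ i, F i}

/-- The polynomial entropy of `f` on `Y` relative to the family `F`:
`limsup_n log #A_n(F;Y) / log n`. -/
noncomputable def polEntRel {X : Type*} (f : X → X) {L : ℕ} (F : Fin L → Set X) (Y : Set X) :
    ℝ≥0∞ :=
  Filter.atTop.limsup fun n : ℕ =>
    ENNReal.ofReal (Real.log ((codings f F Y n).ncard) / Real.log n)

/-- The circle is connected. -/
theorem circle_isConnected_univ : IsConnected (Set.univ : Set Circle) := by
  have hsurj : Function.Surjective Circle.exp := fun z => ⟨Complex.arg z, Circle.exp_arg z⟩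
  have : ConnectedSpace Circle :=
    { toPreconnectedSpace := ⟨by
        rw [← Set.image_univ_of_surjective hsurj]
        exact isPreconnected_univ.image _ Circle.exp.continuous.continuousOn⟩,
      toNonempty := ⟨1⟩ }
  exact isConnected_univ

set_option linter.unusedSectionVars false

section generic
variable {X : Type*} [MetricSpace X] (f : X → X)

theorem dist_le_dynDist {n t : ℕ} (ht : t < n) (x y : X) :
    dist (f^[t] x) (f^[t] y) ≤ dynDist f n x y := by
  rw [dist_nndist]
  exact_mod_cast Finset.le_sup (f := fun k => nndist (f^[k] x) (f^[k] y))
    (Finset.mem_range.2 ht)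

theorem dynDist_le {n : ℕ} {x y : X} {r : ℝ} (hr : 0 ≤ r)
    (h : ∀ t < n, dist (f^[t] x) (f^[t] y) ≤ r) : dynDist f n x y ≤ r := by
  have : ((Finset.range n).sup fun k => nndist (f^[k] x) (f^[k] y)) ≤ ⟨r, hr⟩ := by
    refine Finset.sup_le fun t ht => ?_
    have := h t (Finset.mem_range.1 ht)
    rw [dist_nndist] at this
    apply NNReal.coe_le_coe.1
    exact this
  exact_mod_cast this

/-- uniform modulus for finitely many iterates -/
theorem iter_modulus [CompactSpace X] (hf : Continuous f) (n : ℕ) {ε : ℝ} (hε : 0 < ε) :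
    ∃ r > 0, ∀ x y : X, dist x y < r → ∀ t < n, dist (f^[t] x) (f^[t] y) < ε := by
  induction n with
  | zero => exact ⟨1, one_pos, fun x y _ t ht => absurd ht (Nat.not_lt_zero t)⟩
  | succ n ih =>
    obtain ⟨r, hr, hrp⟩ := ih
    have huc : UniformContinuous (f^[n]) :=
      CompactSpace.uniformContinuous_of_continuous (hf.iterate n)
    obtain ⟨r₂, hr₂, hr₂p⟩ := Metric.uniformContinuous_iff.1 huc ε hε
    refine ⟨min r r₂, lt_min hr hr₂, fun x y hxy t ht => ?_⟩
    rcases Nat.lt_succ_iff_lt_or_eq.1 ht with h | rfl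
    · exact hrp x y (hxy.trans_le (min_le_left _ _)) t h
    · exact hr₂p (hxy.trans_le (min_le_right _ _))

theorem sep_card_bound [CompactSpace X] (hf : Continuous f) (n : ℕ) {ε : ℝ} (hε : 0 < ε) :
    ∃ N : ℕ, ∀ E : Finset X, IsDynSeparated f n ε E → E.card ≤ N := by
  obtain ⟨r, hr, hrp⟩ := iter_modulus f hf n (half_pos hε)
  obtain ⟨t, -, htfin, htcov⟩ :=
    finite_cover_balls_of_compact (isCompact_univ (X := X)) (show 0 < r / 2 by positivity)
  refine ⟨htfin.toFinset.card, fun E hE => ?_⟩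
  have : ∀ x : X, ∃ c ∈ htfin.toFinset, x ∈ Metric.ball c (r / 2) := by
    intro x
    obtain ⟨c, hc, hxc⟩ := Set.mem_iUnion₂.1 (htcov (Set.mem_univ x))
    exact ⟨c, htfin.mem_toFinset.2 hc, hxc⟩
  choose g hg1 hg2 using this
  refine Finset.card_le_card_of_injOn g (fun x _ => hg1 x) ?_
  intro x hx y hy hxy
  by_contra hne
  have hd : dist x y < r := by
    have := dist_triangle x (g x) y
    have h1 := Metric.mem_ball.1 (hg2 x)
    have h2 := Metric.mem_ball.1 (hg2 y)
    rw [hxy] at this h1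
    rw [dist_comm] at h2
    linarith
  have : dynDist f n x y < ε := by
    rcases Nat.eq_zero_or_pos n with rfl | hn
    · simpa [dynDist] using hε
    · calc dynDist f n x y ≤ ε / 2 :=
            dynDist_le f (le_of_lt (half_pos hε)) (fun t ht => le_of_lt (hrp x y hd t ht))
      _ < ε := by linarith
  exact absurd (hE x (Finset.mem_coe.1 hx) y (Finset.mem_coe.1 hy) hne) (not_le.2 this)

theorem zero_mem_sepSet (Y : Set X) (n : ℕ) (ε : ℝ) :
    0 ∈ {m : ℕ | ∃ E : Finset X, ↑E ⊆ Y ∧ E.card = m ∧ IsDynSeparated f n ε E} :=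
  ⟨∅, by simp, Finset.card_empty, fun x hx => absurd hx (Finset.notMem_empty x)⟩

theorem maxSep_le {Y : Set X} {n : ℕ} {ε : ℝ} {N : ℕ}
    (h : ∀ E : Finset X, ↑E ⊆ Y → IsDynSeparated f n ε E → E.card ≤ N) :
    maxSep f Y n ε ≤ N := by
  refine csSup_le ⟨0, zero_mem_sepSet f Y n ε⟩ ?_
  rintro m ⟨E, hEY, rfl, hsep⟩
  exact h E hEY hsep

theorem le_maxSep [CompactSpace X] (hf : Continuous f) {Y : Set X} {n : ℕ} {ε : ℝ}
    (hε : 0 < ε) (E : Finset X) (hEY : ↑E ⊆ Y) (hsep : IsDynSeparated f n ε E) :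
    E.card ≤ maxSep f Y n ε := by
  obtain ⟨N, hN⟩ := sep_card_bound f hf n hε
  refine le_csSup ⟨N, ?_⟩ ⟨E, hEY, rfl, hsep⟩
  rintro m ⟨E', -, rfl, hsep'⟩
  exact hN E' hsep'

end generic


abbrev I01 := ↥unitInterval

section interval
variable (e : I01 ≃ₜ I01)

theorem interior_maps (h0 : e 0 = 0) (h1 : e 1 = 1) {x : I01} (hx0 : 0 < x) (hx1 : x < 1) :
    0 < e x ∧ e x < 1 := by
  constructor
  · rcases eq_or_lt_of_le (unitInterval.nonneg' : (0:I01) ≤ e x) with h | h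
    · exact absurd (e.injective (h.symm.trans h0.symm)) (ne_of_gt hx0)
    · exact h
  · rcases eq_or_lt_of_le (unitInterval.le_one' : e x ≤ 1) with h | h
    · exact absurd (e.injective (h.trans h1.symm)) (ne_of_lt hx1)
    · exact h

theorem sign_dichotomy (hfp : ∀ x : I01, 0 < x → x < 1 → e x ≠ x) :
    (∀ x : I01, 0 < x → x < 1 → x < e x) ∨ (∀ x : I01, 0 < x → x < 1 → e x < x) := by
  by_contra hc
  push_neg at hc
  obtain ⟨⟨x, hx0, hx1, hxle⟩, ⟨y, hy0, hy1, hyle⟩⟩ := hc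
  have hx : e x < x := lt_of_le_of_ne hxle (hfp x hx0 hx1)
  have hy : y < e y := lt_of_le_of_ne hyle (Ne.symm (hfp y hy0 hy1))
  -- transfer to ℝ via projIcc
  set g : ℝ → ℝ := fun t => (e (Set.projIcc 0 1 zero_le_one t) : ℝ) - t with hg
  have hgc : Continuous g := by
    exact (continuous_subtype_val.comp (e.continuous.comp (continuous_projIcc))).sub continuous_id
  have key : ∀ z : I01, 0 < z → z < 1 → g z ≠ 0 := by
    intro z hz0 hz1 hz
    have hproj : Set.projIcc 0 1 zero_le_one (z:ℝ) = z := Set.projIcc_val zero_le_one z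
    rw [hg] at hz
    simp only [hproj] at hz
    have : e z = z := Subtype.ext (by linarith [sub_eq_zero.1 hz])
    exact hfp z hz0 hz1 this
  have hgx : g x < 0 := by
    have hproj : Set.projIcc 0 1 zero_le_one (x:ℝ) = x := Set.projIcc_val zero_le_one x
    simp only [hg, hproj]
    have : (e x : ℝ) < x := Subtype.coe_lt_coe.2 hx
    linarith
  have hgy : 0 < g y := by
    have hproj : Set.projIcc 0 1 zero_le_one (y:ℝ) = y := Set.projIcc_val zero_le_one y
    simp only [hg, hproj]
    have : (y : ℝ) < e y := Subtype.coe_lt_coe.2 hy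
    linarith
  -- IVT between x and y
  rcases le_total (x:ℝ) (y:ℝ) with hxy | hxy
  · have := intermediate_value_Icc hxy (hgc.continuousOn)
    have h0 : (0:ℝ) ∈ Icc (g x) (g y) := ⟨le_of_lt hgx, le_of_lt hgy⟩
    obtain ⟨z, hz, hz0⟩ := this h0
    have hz0' : (0:ℝ) < z := lt_of_lt_of_le (Subtype.coe_lt_coe.2 hx0) hz.1
    have hz1' : z < 1 := lt_of_le_of_lt hz.2 (Subtype.coe_lt_coe.2 hy1)
    have hzI : z ∈ unitInterval := ⟨le_of_lt hz0', le_of_lt hz1'⟩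
    have : Set.projIcc 0 1 zero_le_one z = ⟨z, hzI⟩ := Set.projIcc_of_mem zero_le_one hzI
    refine key ⟨z, hzI⟩ (by exact_mod_cast hz0') (by exact_mod_cast hz1') ?_
    simpa [g, this] using hz0
  · have := intermediate_value_Icc' hxy (hgc.continuousOn)
    have h0 : (0:ℝ) ∈ Icc (g x) (g y) := ⟨le_of_lt hgx, le_of_lt hgy⟩
    obtain ⟨z, hz, hz0⟩ := this h0
    have hz0' : (0:ℝ) < z := lt_of_lt_of_le (Subtype.coe_lt_coe.2 hy0) hz.1
    have hz1' : z < 1 := lt_of_le_of_lt hz.2 (Subtype.coe_lt_coe.2 hx1)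
    have hzI : z ∈ unitInterval := ⟨le_of_lt hz0', le_of_lt hz1'⟩
    have : Set.projIcc 0 1 zero_le_one z = ⟨z, hzI⟩ := Set.projIcc_of_mem zero_le_one hzI
    refine key ⟨z, hzI⟩ (by exact_mod_cast hz0') (by exact_mod_cast hz1') ?_
    simpa [g, this] using hz0
end interval

theorem dynDist_comm {X : Type*} [MetricSpace X] (f : X → X) (n : ℕ) (x y : X) :
    dynDist f n x y = dynDist f n y x := by
  unfold dynDist
  congr 1
  exact Finset.sup_congr rfl fun t _ => nndist_comm _ _

theorem iterate_pi {α : Type*} {k : ℕ} (f : α → α) (t : ℕ) (x : Fin k → α) :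
    (fun (x : Fin k → α) (j : Fin k) => f (x j))^[t] x = fun j => f^[t] (x j) := by
  induction t generalizing x with
  | zero => rfl
  | succ t ih =>
    rw [Function.iterate_succ_apply, ih]
    funext j
    rw [Function.iterate_succ_apply]

section incr
variable (e : I01 ≃ₜ I01) (h0 : e 0 = 0) (h1 : e 1 = 1)
    (hlt : ∀ x : I01, 0 < x → x < 1 → x < e x)

include h0 in
theorem symm_zero : e.symm 0 = 0 := by
  conv_lhs => rw [← h0]
  exact e.symm_apply_apply 0

include h1 in
theorem symm_one : e.symm 1 = 1 := by
  conv_lhs => rw [← h1]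
  exact e.symm_apply_apply 1

include h0 h1 hlt in
theorem symm_lt {y : I01} (hy0 : 0 < y) (hy1 : y < 1) : e.symm y < y := by
  obtain ⟨hz0, hz1⟩ := interior_maps e.symm (symm_zero e h0) (symm_one e h1) hy0 hy1
  have := hlt (e.symm y) hz0 hz1
  rwa [e.apply_symm_apply] at this

noncomputable def aPt : I01 := ⟨1/2, by norm_num, by norm_num⟩

noncomputable def bseq (m : ℕ) : I01 := (⇑e.symm)^[m] (aPt)

include h0 h1 hlt in
theorem bseq_interior (m : ℕ) : 0 < bseq e m ∧ bseq e m < 1 := by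
  induction m with
  | zero => exact ⟨by norm_num [bseq, aPt, ← Subtype.coe_lt_coe],
      by norm_num [bseq, aPt, ← Subtype.coe_lt_coe]⟩
  | succ m ih =>
    rw [bseq, Function.iterate_succ_apply']
    exact interior_maps e.symm (symm_zero e h0) (symm_one e h1) ih.1 ih.2

include h0 h1 hlt in
theorem bseq_strictAnti : StrictAnti (bseq e) := by
  refine strictAnti_nat_of_succ_lt fun m => ?_
  rw [bseq, Function.iterate_succ_apply']
  exact symm_lt e h0 h1 hlt (bseq_interior e h0 h1 hlt m).1 (bseq_interior e h0 h1 hlt m).2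

theorem iter_bseq {t m : ℕ} (ht : t ≤ m) : (⇑e)^[t] (bseq e m) = bseq e (m - t) := by
  have : bseq e m = (⇑e.symm)^[t] (bseq e (m - t)) := by
    rw [bseq, bseq, ← Function.iterate_add_apply, Nat.add_sub_cancel' ht]
  rw [this]
  have hli : Function.LeftInverse ⇑e ⇑e.symm := e.apply_symm_apply
  exact hli.iterate t _
end incr

section lower
set_option linter.unusedSectionVars false
variable (e : I01 ≃ₜ I01) (h0 : e 0 = 0) (h1 : e 1 = 1)
    (hlt : ∀ x : I01, 0 < x → x < 1 → x < e x) {k : ℕ} (hk : 1 ≤ k)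

/-- index function: m w j = (k-1-j)*q + w j -/
def mval (q : ℕ) (w : Fin k → Fin q) (j : Fin k) : ℕ := (k - 1 - (j:ℕ)) * q + (w j : ℕ)

include hk in
theorem mval_lt {q n : ℕ} (hq : 1 ≤ q) (hn : k * q ≤ n) (w : Fin k → Fin q) (j : Fin k) :
    mval q w j < n := by
  have hj : (j:ℕ) < k := j.2
  have hw : (w j : ℕ) < q := (w j).2
  have : (k - 1 - (j:ℕ)) ≤ k - 1 := Nat.sub_le _ _
  have h2 : (k - 1 - (j:ℕ)) * q ≤ (k-1) * q := Nat.mul_le_mul_right q this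
  have h3 : (k-1) * q + q = k * q := by
    have : k - 1 + 1 = k := Nat.succ_pred_eq_of_pos hk
    calc (k-1) * q + q = (k - 1 + 1) * q := by ring
    _ = k * q := by rw [this]
  have hlt2 : mval q w j < k * q := by unfold mval; omega
  omega

theorem mval_strictAnti {q : ℕ} (w : Fin k → Fin q) :
    ∀ {i j : Fin k}, i < j → mval q w j < mval q w i := by
  intro i j hij
  have hi : (i:ℕ) < k := i.2
  have hj : (j:ℕ) < k := j.2
  have hij' : (i:ℕ) < (j:ℕ) := hij
  have h1 : k - 1 - (j:ℕ) + 1 ≤ k - 1 - (i:ℕ) := by omega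
  have hwj : (w j : ℕ) < q := (w j).2
  have hwi : (0:ℕ) ≤ (w i : ℕ) := Nat.zero_le _
  have : (k - 1 - (j:ℕ)) * q + q ≤ (k - 1 - (i:ℕ)) * q := by
    calc (k - 1 - (j:ℕ)) * q + q = (k - 1 - (j:ℕ) + 1) * q := by ring
    _ ≤ (k - 1 - (i:ℕ)) * q := Nat.mul_le_mul_right q h1
  unfold mval
  omega

noncomputable def tupleOf (q : ℕ) (w : Fin k → Fin q) : Fin k → I01 :=
  fun j => bseq e (mval q w j)

include h0 h1 hlt in
theorem tupleOf_strictMono (q : ℕ) (w : Fin k → Fin q) : StrictMono (tupleOf e q w) :=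
  fun i j hij => bseq_strictAnti e h0 h1 hlt (mval_strictAnti w hij)

include h0 h1 hlt in
theorem tupleOf_inj (q : ℕ) : Function.Injective (tupleOf e (k := k) q) := by
  intro w w' h
  funext j
  have hj := congrFun h j
  have := (bseq_strictAnti e h0 h1 hlt).injective hj
  unfold mval at this
  have hwj : (w j : ℕ) < q := (w j).2
  have hwj' : (w' j : ℕ) < q := (w' j).2
  exact Fin.ext (by omega)

noncomputable def epsLow : ℝ := (aPt : ℝ) - (bseq e 1 : ℝ)

include h0 h1 hlt in
theorem epsLow_pos : 0 < epsLow e := by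
  have : bseq e 1 < bseq e 0 := bseq_strictAnti e h0 h1 hlt (by norm_num)
  have : (bseq e 1 : ℝ) < (bseq e 0 : ℝ) := Subtype.coe_lt_coe.2 this
  simpa [epsLow, bseq] using this

include h0 h1 hlt hk in
theorem sep_family {q n : ℕ} (hq : 1 ≤ q) (hn : k * q ≤ n) :
    ∃ E : Finset (Fin k → I01), ↑E ⊆ {x : Fin k → I01 | StrictMono x} ∧ E.card = q ^ k ∧
      IsDynSeparated (fun (x : Fin k → I01) (j : Fin k) => e (x j)) n (epsLow e) E := by
  classical
  refine ⟨Finset.image (tupleOf e q) Finset.univ, ?_, ?_, ?_⟩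
  · intro x hx
    simp only [Finset.coe_image, Set.mem_image] at hx
    obtain ⟨w, -, rfl⟩ := hx
    exact tupleOf_strictMono e h0 h1 hlt q w
  · rw [Finset.card_image_of_injective _ (tupleOf_inj e h0 h1 hlt q)]
    simp
  · -- separation
    have key : ∀ (w w' : Fin k → Fin q), w ≠ w' →
        epsLow e ≤ dynDist (fun (x : Fin k → I01) (j : Fin k) => e (x j)) n
          (tupleOf e q w) (tupleOf e q w') := by
      -- first a one-sided version
      have one_sided : ∀ (w w' : Fin k → Fin q) (j : Fin k),
          mval q w j < mval q w' j →
          epsLow e ≤ dynDist (fun (x : Fin k → I01) (j : Fin k) => e (x j)) n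
            (tupleOf e q w) (tupleOf e q w') := by
        intro w w' j hmm
        set F := fun (x : Fin k → I01) (j : Fin k) => e (x j) with hF
        set t := mval q w j with htdef
        have ht : t < n := mval_lt hk hq hn w j
        have hx : (⇑e)^[t] (tupleOf e q w j) = bseq e 0 := by
          rw [tupleOf, iter_bseq e le_rfl, Nat.sub_self]
        have hy : (⇑e)^[t] (tupleOf e q w' j) = bseq e (mval q w' j - t) := by
          rw [tupleOf, iter_bseq e (le_of_lt hmm)]
        have hl1 : 1 ≤ mval q w' j - t := by omega
        have hble : bseq e (mval q w' j - t) ≤ bseq e 1 :=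
          (bseq_strictAnti e h0 h1 hlt).antitone hl1
        have hd : epsLow e ≤ dist ((⇑e)^[t] (tupleOf e q w j)) ((⇑e)^[t] (tupleOf e q w' j)) := by
          have hb0 : (bseq e 0 : ℝ) = (aPt : ℝ) := rfl
          have h1' : (bseq e (mval q w' j - t) : ℝ) ≤ (bseq e 1 : ℝ) := hble
          have h2' : (bseq e 1 : ℝ) < (aPt : ℝ) := by
            have := Subtype.coe_lt_coe.2 (bseq_strictAnti e h0 h1 hlt (show 0 < 1 by norm_num))
            rwa [hb0] at this
          rw [hx, hy, Subtype.dist_eq, Real.dist_eq, hb0]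
          rw [abs_of_nonneg (by linarith)]
          unfold epsLow
          linarith
        calc epsLow e ≤ dist ((⇑e)^[t] (tupleOf e q w j)) ((⇑e)^[t] (tupleOf e q w' j)) := hd
          _ ≤ dist (F^[t] (tupleOf e q w)) (F^[t] (tupleOf e q w')) := by
              rw [hF, iterate_pi, iterate_pi]
              exact dist_le_pi_dist (fun j => (⇑e)^[t] (tupleOf e q w j))
                (fun j => (⇑e)^[t] (tupleOf e q w' j)) j
          _ ≤ dynDist F n (tupleOf e q w) (tupleOf e q w') := dist_le_dynDist F ht _ _
      intro w w' hww
      obtain ⟨j, hj⟩ := Function.ne_iff.1 hww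
      have hmm : mval q w j ≠ mval q w' j := by
        unfold mval
        intro hcontra
        exact hj (Fin.ext (by omega))
      rcases lt_or_gt_of_ne hmm with h | h
      · exact one_sided w w' j h
      · have := one_sided w' w j h
        rwa [dynDist_comm] at this
    intro x hx y hy hxy
    simp only [Finset.mem_image] at hx hy
    obtain ⟨w, -, rfl⟩ := hx
    obtain ⟨w', -, rfl⟩ := hy
    exact key w w' (fun hww => hxy (by rw [hww]))
end lower

section lowerlimsup
set_option linter.unusedSectionVars false
variable (e : I01 ≃ₜ I01) (h0 : e 0 = 0) (h1 : e 1 = 1)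
    (hlt : ∀ x : I01, 0 < x → x < 1 → x < e x) {k : ℕ} (hk : 1 ≤ k)

theorem Fmap_continuous : Continuous (fun (x : Fin k → I01) (j : Fin k) => e (x j)) :=
  continuous_pi fun j => e.continuous.comp (continuous_apply j)

include h0 h1 hlt hk in
theorem lower_bound_limsup :
    (k : ℝ≥0∞) ≤ Filter.atTop.limsup fun n : ℕ =>
      ENNReal.ofReal (Real.log (maxSep (fun (x : Fin k → I01) (j : Fin k) => e (x j))
        {x : Fin k → I01 | StrictMono x} n (epsLow e)) / Real.log n) := by
  classical
  set F := fun (x : Fin k → I01) (j : Fin k) => e (x j) with hF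
  set Y := {x : Fin k → I01 | StrictMono x} with hY
  set C : ℝ := Real.log (2 * k) with hC
  set L' : ℕ → ℝ≥0∞ := fun n => ENNReal.ofReal ((k : ℝ) - (k : ℝ) * C / Real.log n) with hL'
  have hmono : ∀ n : ℕ, 2 * k ≤ n →
      L' n ≤ ENNReal.ofReal (Real.log (maxSep F Y n (epsLow e)) / Real.log n) := by
    intro n hn
    have hn2 : (2:ℕ) ≤ n := le_trans (by omega) hn
    set q : ℕ := n / k with hq
    have hq1 : 1 ≤ q := Nat.one_le_div_iff (by omega) |>.2 (by omega)
    have hkq : k * q ≤ n := by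
      rw [hq, mul_comm]
      exact Nat.div_mul_le_self n k
    obtain ⟨E, hEY, hcard, hsep⟩ := sep_family e h0 h1 hlt hk hq1 hkq
    have hle : q ^ k ≤ maxSep F Y n (epsLow e) := by
      rw [← hcard]
      exact le_maxSep F (Fmap_continuous e) (epsLow_pos e h0 h1 hlt) E hEY hsep
    -- real estimates
    have hlogn : (0:ℝ) < Real.log n := Real.log_pos (by exact_mod_cast hn2)
    have hqreal : ((n:ℝ) / (2 * k)) ≤ (q:ℝ) := by
      have hkpos : (0:ℝ) < (k:ℝ) := by exact_mod_cast hk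
      have h1' : (n:ℝ) - (k:ℝ) < (k:ℝ) * (q:ℝ) := by
        have hdm := Nat.div_add_mod n k
        have hmod := Nat.mod_lt n (show 0 < k by omega)
        have hdm' : (k:ℝ) * (q:ℝ) + ((n % k : ℕ):ℝ) = (n:ℝ) := by exact_mod_cast hdm
        have hmod' : ((n % k : ℕ):ℝ) < (k:ℝ) := by exact_mod_cast hmod
        linarith
      have hnk : (2:ℝ) * k ≤ (n:ℝ) := by exact_mod_cast hn
      rw [div_le_iff₀ (by positivity)]
      nlinarith
    have hlq : Real.log ((n:ℝ) / (2 * k)) ≤ Real.log (q:ℝ) := by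
      apply Real.log_le_log (by positivity ) hqreal
    have hlogq : Real.log ((n:ℝ)) - C ≤ Real.log (q:ℝ) := by
      rw [hC]
      have : Real.log ((n:ℝ) / (2 * k)) = Real.log n - Real.log (2 * k) := by
        rw [Real.log_div (by positivity) (by positivity)]
      linarith
    have hms : (k:ℝ) * Real.log (q:ℝ) ≤ Real.log (maxSep F Y n (epsLow e)) := by
      have hqk : ((q:ℝ)) ^ k ≤ ((maxSep F Y n (epsLow e) : ℕ) : ℝ) := by
        exact_mod_cast hle
      have := Real.log_le_log (by positivity) hqk
      rwa [Real.log_pow] at this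
    apply ENNReal.ofReal_le_ofReal
    rw [le_div_iff₀ hlogn]
    have hexp : ((k:ℝ) - (k:ℝ) * C / Real.log n) * Real.log n
        = (k:ℝ) * Real.log n - (k:ℝ) * C := by
      field_simp
    rw [hexp]
    have hkk : (0:ℝ) ≤ (k:ℝ) := by positivity
    nlinarith [mul_le_mul_of_nonneg_left hlogq hkk]
  have htend : Filter.Tendsto L' Filter.atTop (𝓝 ((k : ℝ≥0∞))) := by
    have h1' : Filter.Tendsto (fun n : ℕ => Real.log n) Filter.atTop Filter.atTop :=
      Real.tendsto_log_atTop.comp tendsto_natCast_atTop_atTop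
    have h2' : Filter.Tendsto (fun n : ℕ => (k:ℝ) * C / Real.log n) Filter.atTop (𝓝 0) :=
      Filter.Tendsto.div_atTop tendsto_const_nhds h1'
    have h3' : Filter.Tendsto (fun n : ℕ => (k : ℝ) - (k:ℝ) * C / Real.log n)
        Filter.atTop (𝓝 ((k:ℝ) - 0)) := tendsto_const_nhds.sub h2'
    rw [sub_zero] at h3'
    have := (ENNReal.continuous_ofReal.tendsto ((k:ℝ))).comp h3'
    rwa [show ENNReal.ofReal ((k:ℝ)) = (k:ℝ≥0∞) by exact_mod_cast ENNReal.ofReal_natCast k]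
      at this
  calc (k : ℝ≥0∞) = Filter.atTop.limsup L' := (htend.limsup_eq).symm
    _ ≤ _ := by
        refine Filter.limsup_le_limsup ?_ ?_ ?_
        · filter_upwards [Filter.eventually_ge_atTop (2 * k)] with n hn
          exact hmono n hn
        · exact Filter.isCobounded_le_of_bot
        · exact Filter.isBounded_le_of_top
end lowerlimsup

section upper
set_option linter.unusedSectionVars false
variable (e : I01 ≃ₜ I01) (h0 : e 0 = 0) (h1 : e 1 = 1)
    (hlt : ∀ x : I01, 0 < x → x < 1 → x < e x)

include h0 h1 hlt in
theorem le_apply (x : I01) : (x:ℝ) ≤ (e x : ℝ) := by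
  rcases eq_or_lt_of_le (unitInterval.nonneg' : (0:I01) ≤ x) with h | hx0
  · rw [← h, h0]
  rcases eq_or_lt_of_le (unitInterval.le_one' : x ≤ 1) with h | hx1
  · rw [h, h1]
  · exact le_of_lt (Subtype.coe_lt_coe.2 (hlt x hx0 hx1))

include h0 h1 hlt in
theorem orbit_mono (x : I01) : Monotone fun t => ((⇑e)^[t] x : ℝ) := by
  apply monotone_nat_of_le_succ
  intro t
  rw [Function.iterate_succ_apply']
  exact le_apply e h0 h1 hlt ((⇑e)^[t] x)

include h0 h1 hlt in
theorem escape {c : ℝ} (hc0 : 0 < c) (hc1 : c ≤ 1/4) :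
    ∃ N : ℕ, ∀ x : I01, ∀ s t : ℕ, c ≤ ((⇑e)^[s] x : ℝ) → s + N ≤ t →
      1 - c ≤ ((⇑e)^[t] x : ℝ) := by
  classical
  set M : Set I01 := {x : I01 | c ≤ (x:ℝ) ∧ (x:ℝ) ≤ 1 - c} with hM
  have hMne : M.Nonempty := ⟨⟨c, le_of_lt hc0, by linarith⟩, le_refl c, by simp; linarith⟩
  have hMclosed : IsClosed M := by
    have : M = (fun x : I01 => (x:ℝ)) ⁻¹' (Set.Icc c (1 - c)) := rfl
    rw [this]
    exact IsClosed.preimage continuous_subtype_val isClosed_Icc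
  have hMcomp : IsCompact M := hMclosed.isCompact
  set g : I01 → ℝ := fun x => (e x : ℝ) - (x:ℝ) with hg
  have hgc : Continuous g := (continuous_subtype_val.comp e.continuous).sub continuous_subtype_val
  obtain ⟨x₀, hx₀M, hx₀min'⟩ := hMcomp.exists_isMinOn hMne hgc.continuousOn
  have hx₀min : ∀ y ∈ M, g x₀ ≤ g y := fun y hy => hx₀min' hy
  set μ : ℝ := g x₀ with hμ
  have hμpos : 0 < μ := by
    have hx0 : 0 < x₀ := by
      rw [← Subtype.coe_lt_coe]
      exact lt_of_lt_of_le hc0 hx₀M.1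
    have hx1 : x₀ < 1 := by
      rw [← Subtype.coe_lt_coe]
      exact lt_of_le_of_lt hx₀M.2 (by norm_num; linarith)
    have := Subtype.coe_lt_coe.2 (hlt x₀ hx0 hx1)
    simp only [hμ, hg]
    linarith
  set N : ℕ := ⌈1/μ⌉₊ with hN
  have hNμ : 1 ≤ (N:ℝ) * μ := by
    have : 1/μ ≤ (N:ℝ) := Nat.le_ceil _
    rw [div_le_iff₀ hμpos] at this
    linarith [this]
  refine ⟨N, fun x s t hs hst => ?_⟩
  have key : ∀ i : ℕ, 1 - c ≤ ((⇑e)^[s + i] x : ℝ) ∨ c + i * μ ≤ ((⇑e)^[s + i] x : ℝ) := by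
    intro i
    induction i with
    | zero => right; simpa using hs
    | succ i ih =>
      have hstep : ((⇑e)^[s + i] x : ℝ) ≤ ((⇑e)^[s + (i+1)] x : ℝ) :=
        orbit_mono e h0 h1 hlt x (by omega)
      rcases ih with h | h
      · left; linarith
      · by_cases hhi : 1 - c ≤ ((⇑e)^[s + i] x : ℝ)
        · left; linarith
        · right
          push_neg at hhi
          have hmem : (⇑e)^[s + i] x ∈ M := by
            refine ⟨?_, le_of_lt hhi⟩
            have : (0:ℝ) ≤ i * μ := by positivity
            linarith
          have := hx₀min _ hmem
          have hstep2 : μ ≤ (e ((⇑e)^[s + i] x) : ℝ) - ((⇑e)^[s + i] x : ℝ) := this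
          rw [show s + (i+1) = (s + i) + 1 by ring, Function.iterate_succ_apply']
          push_cast
          nlinarith [hstep2]
  have hN' : 1 - c ≤ ((⇑e)^[s + N] x : ℝ) := by
    rcases key N with h | h
    · exact h
    · have hle1 : ((⇑e)^[s + N] x : ℝ) ≤ 1 := unitInterval.le_one'
      nlinarith
  calc 1 - c ≤ ((⇑e)^[s + N] x : ℝ) := hN'
    _ ≤ ((⇑e)^[t] x : ℝ) := orbit_mono e h0 h1 hlt x hst
end upper

section upper2
set_option linter.unusedSectionVars false
variable (e : I01 ≃ₜ I01) (h0 : e 0 = 0) (h1 : e 1 = 1)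
    (hlt : ∀ x : I01, 0 < x → x < 1 → x < e x) {k : ℕ}

include h0 h1 hlt in
theorem card_bound {ε : ℝ} (hε : 0 < ε) :
    ∃ A : ℕ, 1 ≤ A ∧ ∀ n : ℕ, ∀ E : Finset (Fin k → I01),
      IsDynSeparated (fun (x : Fin k → I01) (j : Fin k) => e (x j)) n ε E →
      E.card ≤ ((n + 1) * A) ^ k := by
  classical
  set δ : ℝ := min ε 1 with hδ
  have hδ0 : 0 < δ := lt_min hε one_pos
  have hδε : δ ≤ ε := min_le_left _ _
  have hδ1 : δ ≤ 1 := min_le_right _ _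
  set c : ℝ := δ / 4 with hc
  have hc0 : 0 < c := by positivity
  have hc14 : c ≤ 1/4 := by rw [hc]; linarith
  have hcε : c < ε := by rw [hc]; linarith
  obtain ⟨N, hN⟩ := escape e h0 h1 hlt hc0 hc14
  set B : ℕ := ⌊1/c⌋₊ with hB
  set D : I01 → ℕ := fun y => ⌊(y:ℝ)/c⌋₊ with hD
  have hDB : ∀ y : I01, D y ≤ B := by
    intro y
    apply Nat.floor_le_floor
    gcongr
    exact unitInterval.le_one'
  have hDclose : ∀ y y' : I01, D y = D y' → |(y:ℝ) - (y':ℝ)| < c := by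
    intro y y' hyy
    have hy1 : (D y : ℝ) * c ≤ (y:ℝ) := by
      rw [← le_div_iff₀ hc0]
      exact Nat.floor_le (div_nonneg unitInterval.nonneg' (le_of_lt hc0))
    have hy2 : (y:ℝ) < ((D y : ℝ) + 1) * c := by
      rw [← div_lt_iff₀ hc0]
      exact Nat.lt_floor_add_one _
    have hy1' : (D y' : ℝ) * c ≤ (y':ℝ) := by
      rw [← le_div_iff₀ hc0]
      exact Nat.floor_le (div_nonneg unitInterval.nonneg' (le_of_lt hc0))
    have hy2' : (y':ℝ) < ((D y' : ℝ) + 1) * c := by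
      rw [← div_lt_iff₀ hc0]
      exact Nat.lt_floor_add_one _
    rw [hyy] at hy1 hy2
    rw [abs_sub_lt_iff]
    constructor <;> nlinarith
  refine ⟨(B+1) ^ N, Nat.one_le_pow _ _ (Nat.succ_pos B), fun n E hsep => ?_⟩
  set F := fun (x : Fin k → I01) (j : Fin k) => e (x j) with hF
  set sfun : (Fin k → I01) → Fin k → ℕ :=
    fun x j => sInf {t : ℕ | t = n ∨ c ≤ (((⇑e)^[t] (x j)) : ℝ)} with hsfun
  have hsne : ∀ (x : Fin k → I01) (j : Fin k),
      {t : ℕ | t = n ∨ c ≤ (((⇑e)^[t] (x j)) : ℝ)}.Nonempty := fun x j => ⟨n, Or.inl rfl⟩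
  have hsle : ∀ x j, sfun x j ≤ n := fun x j => Nat.sInf_le (Or.inl rfl)
  have hslt : ∀ x j t, t < sfun x j → t ≠ n ∧ (((⇑e)^[t] (x j)) : ℝ) < c := by
    intro x j t ht
    have := Nat.notMem_of_lt_sInf ht
    simp only [Set.mem_setOf_eq, not_or, not_le] at this
    exact this
  have hsmem : ∀ x j, sfun x j = n ∨ c ≤ (((⇑e)^[sfun x j] (x j)) : ℝ) :=
    fun x j => Nat.sInf_mem (hsne x j)
  set code : (Fin k → I01) → (Fin k → Fin (n+1) × (Fin N → Fin (B+1))) :=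
    fun x j => (⟨sfun x j, Nat.lt_succ_of_le (hsle x j)⟩,
      fun i => ⟨D ((⇑e)^[sfun x j + (i:ℕ)] (x j)), Nat.lt_succ_of_le (hDB _)⟩) with hcode
  have key : ∀ x y : Fin k → I01, code x = code y → dynDist F n x y ≤ c := by
    intro x y hxy
    refine dynDist_le F (le_of_lt hc0) fun t ht => ?_
    rw [hF, iterate_pi, iterate_pi, dist_pi_le_iff (le_of_lt hc0)]
    intro j
    have hj := congrFun hxy j
    have hseq : sfun x j = sfun y j :=
      congrArg (fun p : Fin (n+1) × (Fin N → Fin (B+1)) => (p.1 : ℕ)) hj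
    have hDeq : ∀ i : Fin N,
        D ((⇑e)^[sfun x j + (i:ℕ)] (x j)) = D ((⇑e)^[sfun y j + (i:ℕ)] (y j)) :=
      fun i => congrArg (fun p : Fin (n+1) × (Fin N → Fin (B+1)) => ((p.2 i : Fin (B+1)) : ℕ)) hj
    set s := sfun x j with hs
    rw [Subtype.dist_eq, Real.dist_eq]
    rcases lt_or_ge t s with hts | hts
    · have hx' := (hslt x j t hts).2
      have hy' := (hslt y j t (hseq ▸ hts)).2
      have h0x : (0:ℝ) ≤ ((⇑e)^[t] (x j) : ℝ) := unitInterval.nonneg'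
      have h0y : (0:ℝ) ≤ ((⇑e)^[t] (y j) : ℝ) := unitInterval.nonneg'
      exact le_of_lt (abs_sub_lt_iff.2 ⟨by linarith, by linarith⟩)
    · rcases lt_or_ge t (s + N) with htN | htN
      · have hi : t - s < N := by omega
        have this := hDeq ⟨t - s, hi⟩
        rw [← hseq] at this
        have hts' : s + (t - s) = t := by omega
        rw [hts'] at this
        exact le_of_lt (hDclose _ _ this)
      · have hsn : s < n := by omega
        have hcs : c ≤ (((⇑e)^[s] (x j)) : ℝ) := by
          rcases hsmem x j with h | h
          · omega
          · exact h
        have hcs' : c ≤ (((⇑e)^[s] (y j)) : ℝ) := by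
          rcases hsmem y j with h | h
          · rw [← hseq] at h; omega
          · rwa [← hseq] at h
        have hx1 : 1 - c ≤ ((⇑e)^[t] (x j) : ℝ) := hN (x j) s t hcs htN
        have hy1 : 1 - c ≤ ((⇑e)^[t] (y j) : ℝ) := hN (y j) s t hcs' htN
        have hx2 : ((⇑e)^[t] (x j) : ℝ) ≤ 1 := unitInterval.le_one'
        have hy2 : ((⇑e)^[t] (y j) : ℝ) ≤ 1 := unitInterval.le_one'
        rw [abs_le]
        constructor <;> linarith
  have hinj : Set.InjOn code ↑E := by
    intro x hx y hy hxy
    by_contra hne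
    have := hsep x (Finset.mem_coe.1 hx) y (Finset.mem_coe.1 hy) hne
    have h2 := key x y hxy
    linarith
  calc E.card ≤ Fintype.card (Fin k → Fin (n+1) × (Fin N → Fin (B+1))) := by
        have := Finset.card_le_card_of_injOn code (fun x _ => Finset.mem_univ (code x)) hinj
        simpa using this
    _ = ((n + 1) * (B+1) ^ N) ^ k := by
        simp [Fintype.card_pi]
end upper2

section upper3
set_option linter.unusedSectionVars false
variable (e : I01 ≃ₜ I01) (h0 : e 0 = 0) (h1 : e 1 = 1)
    (hlt : ∀ x : I01, 0 < x → x < 1 → x < e x) {k : ℕ}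

include h0 h1 hlt in
theorem upper_bound_limsup (Y : Set (Fin k → I01)) {ε : ℝ} (hε : 0 < ε) :
    (Filter.atTop.limsup fun n : ℕ =>
      ENNReal.ofReal (Real.log (maxSep (fun (x : Fin k → I01) (j : Fin k) => e (x j)) Y n ε) /
        Real.log n)) ≤ (k : ℝ≥0∞) := by
  classical
  obtain ⟨A, hA1, hA⟩ := card_bound e h0 h1 hlt (k := k) hε
  set F := fun (x : Fin k → I01) (j : Fin k) => e (x j) with hF
  have hms : ∀ n : ℕ, maxSep F Y n ε ≤ ((n+1) * A) ^ k :=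
    fun n => maxSep_le F (fun E _ hsep => hA n E hsep)
  set C : ℝ := Real.log 2 + Real.log A with hC
  have hC0 : 0 ≤ C := by
    have h2 : (0:ℝ) ≤ Real.log 2 := Real.log_nonneg (by norm_num)
    have hA' : (0:ℝ) ≤ Real.log A := Real.log_nonneg (by exact_mod_cast hA1)
    linarith
  set U : ℕ → ℝ≥0∞ := fun n => ENNReal.ofReal ((k:ℝ) + (k:ℝ) * C / Real.log n) with hU
  have hbound : ∀ n : ℕ, 2 ≤ n →
      ENNReal.ofReal (Real.log (maxSep F Y n ε) / Real.log n) ≤ U n := by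
    intro n hn
    have hlogn : (0:ℝ) < Real.log n := Real.log_pos (by exact_mod_cast hn)
    apply ENNReal.ofReal_le_ofReal
    rcases Nat.eq_zero_or_pos (maxSep F Y n ε) with hz | hpos
    · rw [hz]
      simp only [Nat.cast_zero, Real.log_zero, zero_div]
      positivity
    · have h1' : (1:ℝ) ≤ (maxSep F Y n ε : ℝ) := by exact_mod_cast hpos
      have hle : ((maxSep F Y n ε : ℕ) : ℝ) ≤ (((n+1) * A : ℕ) : ℝ) ^ k := by
        exact_mod_cast hms n
      have hlog1 : Real.log (maxSep F Y n ε) ≤ (k:ℝ) * Real.log (((n+1) * A : ℕ) : ℝ) := by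
        have := Real.log_le_log (by linarith) hle
        rwa [Real.log_pow] at this
      have hlog2 : Real.log (((n+1) * A : ℕ) : ℝ) ≤ Real.log 2 + Real.log n + Real.log A := by
        have hposA : (0:ℝ) < (A:ℝ) := by exact_mod_cast hA1
        have hposn : (0:ℝ) < (n:ℝ) := by positivity
        have hn' : (2:ℝ) ≤ (n:ℝ) := by exact_mod_cast hn
        have harg : (((n+1) * A : ℕ) : ℝ) ≤ 2 * n * A := by
          push_cast
          nlinarith [mul_nonneg (by linarith : (0:ℝ) ≤ (n:ℝ) - 1) (le_of_lt hposA)]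
        have := Real.log_le_log (by positivity) harg
        rw [Real.log_mul (by positivity) (ne_of_gt hposA), Real.log_mul (by norm_num)
          (ne_of_gt hposn)] at this
        linarith
      rw [div_le_iff₀ hlogn]
      have hexp : ((k:ℝ) + (k:ℝ) * C / Real.log n) * Real.log n
          = (k:ℝ) * Real.log n + (k:ℝ) * C := by field_simp
      rw [hexp, hC]
      have hkk : (0:ℝ) ≤ (k:ℝ) := by positivity
      nlinarith [mul_le_mul_of_nonneg_left hlog2 hkk]
  have htend : Filter.Tendsto U Filter.atTop (𝓝 ((k : ℝ≥0∞))) := by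
    have h1' : Filter.Tendsto (fun n : ℕ => Real.log n) Filter.atTop Filter.atTop :=
      Real.tendsto_log_atTop.comp tendsto_natCast_atTop_atTop
    have h2' : Filter.Tendsto (fun n : ℕ => (k:ℝ) * C / Real.log n) Filter.atTop (𝓝 0) :=
      Filter.Tendsto.div_atTop tendsto_const_nhds h1'
    have h3' : Filter.Tendsto (fun n : ℕ => (k : ℝ) + (k:ℝ) * C / Real.log n)
        Filter.atTop (𝓝 ((k:ℝ) + 0)) := tendsto_const_nhds.add h2'
    rw [add_zero] at h3'
    have := (ENNReal.continuous_ofReal.tendsto ((k:ℝ))).comp h3'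
    rwa [show ENNReal.ofReal ((k:ℝ)) = (k:ℝ≥0∞) by exact_mod_cast ENNReal.ofReal_natCast k]
      at this
  calc Filter.atTop.limsup (fun n : ℕ =>
        ENNReal.ofReal (Real.log (maxSep F Y n ε) / Real.log n)) ≤ Filter.atTop.limsup U := by
        refine Filter.limsup_le_limsup ?_ ?_ ?_
        · filter_upwards [Filter.eventually_ge_atTop 2] with n hn
          exact hbound n hn
        · exact Filter.isCobounded_le_of_bot
        · exact Filter.isBounded_le_of_top
    _ = (k : ℝ≥0∞) := htend.limsup_eq
end upper3


theorem main_incr (e : I01 ≃ₜ I01) (h0 : e 0 = 0) (h1 : e 1 = 1)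
    (hlt : ∀ x : I01, 0 < x → x < 1 → x < e x) {k : ℕ} (hk : 1 ≤ k) :
    polEnt (fun (x : Fin k → I01) (j : Fin k) => e (x j))
      {x : Fin k → I01 | StrictMono x} = (k : ℝ≥0∞) := by
  apply le_antisymm
  · exact iSup₂_le fun ε hε => upper_bound_limsup e h0 h1 hlt _ hε
  · refine le_trans (lower_bound_limsup e h0 h1 hlt hk) ?_
    exact le_iSup₂ (f := fun ε (_ : 0 < ε) => Filter.atTop.limsup fun n : ℕ =>
      ENNReal.ofReal (Real.log (maxSep (fun (x : Fin k → I01) (j : Fin k) => e (x j))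
        {x : Fin k → I01 | StrictMono x} n ε) / Real.log n)) (epsLow e) (epsLow_pos e h0 h1 hlt)

section conj
variable {X : Type*} [MetricSpace X]

theorem conj_iterate {φ f g : X → X} (hconj : ∀ x, φ (f x) = g (φ x)) :
    ∀ (t : ℕ) (x : X), g^[t] (φ x) = φ (f^[t] x) := by
  intro t
  induction t with
  | zero => intro x; rfl
  | succ t ih =>
    intro x
    rw [Function.iterate_succ_apply, Function.iterate_succ_apply, ← hconj, ih]

theorem dynDist_conj {φ f g : X → X} (hiso : Isometry φ)
    (hconj : ∀ x, φ (f x) = g (φ x)) (n : ℕ) (x y : X) :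
    dynDist g n (φ x) (φ y) = dynDist f n x y := by
  unfold dynDist
  congr 1
  refine Finset.sup_congr rfl fun t _ => ?_
  rw [conj_iterate hconj, conj_iterate hconj, hiso.nndist_eq]

theorem sepSet_subset {φ f g : X → X} (hinj : Function.Injective φ) (hiso : Isometry φ)
    (hconj : ∀ x, φ (f x) = g (φ x)) {S : Set X} (hS : φ '' S ⊆ S) (n : ℕ) (ε : ℝ) :
    {m : ℕ | ∃ E : Finset X, ↑E ⊆ S ∧ E.card = m ∧ IsDynSeparated f n ε E} ⊆
    {m : ℕ | ∃ E : Finset X, ↑E ⊆ S ∧ E.card = m ∧ IsDynSeparated g n ε E} := by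
  classical
  rintro m ⟨E, hES, rfl, hsep⟩
  refine ⟨E.image φ, ?_, Finset.card_image_of_injective E hinj, ?_⟩
  · intro y hy
    simp only [Finset.coe_image, Set.mem_image] at hy
    obtain ⟨x, hx, rfl⟩ := hy
    exact hS ⟨x, hES hx, rfl⟩
  · intro a ha b hb hab
    simp only [Finset.mem_image] at ha hb
    obtain ⟨x, hx, rfl⟩ := ha
    obtain ⟨y, hy, rfl⟩ := hb
    rw [dynDist_conj hiso hconj]
    exact hsep x hx y hy (fun h => hab (by rw [h]))

theorem polEnt_conj {φ f g : X → X} (hinv : Function.Involutive φ) (hiso : Isometry φ)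
    (hconj : ∀ x, φ (f x) = g (φ x)) {S : Set X} (hS : φ '' S = S) :
    polEnt g S = polEnt f S := by
  have hconj' : ∀ x, φ (g x) = f (φ x) := by
    intro x
    conv_lhs => rw [← hinv x]
    rw [← hconj (φ x), hinv]
  have hmax : ∀ n ε, maxSep g S n ε = maxSep f S n ε := by
    intro n ε
    unfold maxSep
    congr 1
    apply Set.Subset.antisymm
    · exact sepSet_subset hinv.injective hiso hconj' (by rw [hS]) n ε
    · exact sepSet_subset hinv.injective hiso hconj (by rw [hS]) n ε
  unfold polEnt
  congr 1
  funext ε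
  congr 1
  funext hε
  congr 1
  funext n
  rw [hmax]
end conj

noncomputable def symmH : I01 ≃ₜ I01 :=
  { toFun := unitInterval.symm
    invFun := unitInterval.symm
    left_inv := unitInterval.symm_symm
    right_inv := unitInterval.symm_symm
    continuous_toFun := unitInterval.continuous_symm
    continuous_invFun := unitInterval.continuous_symm }

theorem symm_lt_symm {a b : I01} : unitInterval.symm a < unitInterval.symm b ↔ b < a := by
  rw [← Subtype.coe_lt_coe, ← Subtype.coe_lt_coe, unitInterval.coe_symm_eq,
    unitInterval.coe_symm_eq]
  constructor <;> intro h <;> linarith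

noncomputable def tauMap (k : ℕ) : (Fin k → I01) → (Fin k → I01) :=
  fun x j => unitInterval.symm (x j.rev)

theorem tauMap_invol (k : ℕ) : Function.Involutive (tauMap k) := by
  intro x
  funext j
  simp [tauMap, unitInterval.symm_symm, Fin.rev_rev]

theorem nndist_symm_I (a b : I01) :
    nndist (unitInterval.symm a) (unitInterval.symm b) = nndist a b := by
  have : dist (unitInterval.symm a) (unitInterval.symm b) = dist a b := by
    rw [Subtype.dist_eq, Subtype.dist_eq, unitInterval.coe_symm_eq, unitInterval.coe_symm_eq,
      Real.dist_eq, Real.dist_eq, show (1:ℝ) - a - (1 - b) = -(a - b) by ring, abs_neg]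
  exact NNReal.coe_injective (by rw [coe_nndist, coe_nndist, this])

theorem tauMap_isometry (k : ℕ) : Isometry (tauMap k) := by
  classical
  apply Isometry.of_dist_eq
  intro x y
  rw [dist_pi_def, dist_pi_def]
  congr 1
  have : (Finset.univ.sup fun j : Fin k => nndist (tauMap k x j) (tauMap k y j))
      = Finset.univ.sup ((fun j : Fin k => nndist (x j) (y j)) ∘ Fin.rev) := by
    refine Finset.sup_congr rfl fun j _ => ?_
    simp only [tauMap, Function.comp_apply, nndist_symm_I]
  rw [this, ← Finset.sup_image, Finset.image_univ_of_surjective Fin.rev_surjective]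

theorem tauMap_strictMono {k : ℕ} {x : Fin k → I01} (hx : StrictMono x) :
    StrictMono (tauMap k x) := by
  intro i j hij
  exact symm_lt_symm.2 (hx (Fin.rev_lt_rev.2 hij))

theorem tauMap_image (k : ℕ) :
    tauMap k '' {x : Fin k → I01 | StrictMono x} = {x : Fin k → I01 | StrictMono x} := by
  apply Set.Subset.antisymm
  · rintro y ⟨x, hx, rfl⟩
    exact tauMap_strictMono hx
  · intro x hx
    exact ⟨tauMap k x, tauMap_strictMono hx, tauMap_invol k x⟩


-- STATEMENT 16
theorem stmt16 (f : ↥unitInterval ≃ₜ ↥unitInterval)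
    (hfix : nonWandering ⇑f = Function.fixedPoints ⇑f)
    (h01 : Function.fixedPoints ⇑f = {0, 1}) (k : ℕ) (hk : 1 ≤ k) :
    polEnt (fun x : Fin k → ↥unitInterval => fun j => f (x j))
      {x : Fin k → ↥unitInterval | StrictMono x} = (k : ℝ≥0∞) := by
  have h0 : f 0 = 0 := by
    have : (0:I01) ∈ Function.fixedPoints ⇑f := by rw [h01]; simp
    exact this
  have h1 : f 1 = 1 := by
    have : (1:I01) ∈ Function.fixedPoints ⇑f := by rw [h01]; simp
    exact this
  have hfp : ∀ x : I01, 0 < x → x < 1 → f x ≠ x := by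
    intro x hx0 hx1 hfx
    have hmem : x ∈ Function.fixedPoints ⇑f := hfx
    rw [h01] at hmem
    rcases hmem with h | h
    · rw [Set.mem_singleton_iff.1 (Set.mem_singleton_iff.2 h)] at hx0
      exact lt_irrefl _ hx0
    · rw [Set.mem_singleton_iff.1 h] at hx1
      exact lt_irrefl _ hx1
  clear hfix
  rcases sign_dichotomy f hfp with hup | hdn
  · exact main_incr f h0 h1 hup hk
  · set e' : I01 ≃ₜ I01 := symmH.trans (f.trans symmH) with he'
    have he'app : ∀ x : I01, e' x = unitInterval.symm (f (unitInterval.symm x)) := fun x => rfl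
    have h0' : e' 0 = 0 := by
      rw [he'app, unitInterval.symm_zero, h1, unitInterval.symm_one]
    have h1' : e' 1 = 1 := by
      rw [he'app, unitInterval.symm_one, h0, unitInterval.symm_zero]
    have hlt' : ∀ x : I01, 0 < x → x < 1 → x < e' x := by
      intro x hx0 hx1
      have hs0 : 0 < unitInterval.symm x := by
        rw [← unitInterval.symm_one]
        exact symm_lt_symm.2 hx1
      have hs1 : unitInterval.symm x < 1 := by
        rw [← unitInterval.symm_zero]
        exact symm_lt_symm.2 hx0
      have := hdn (unitInterval.symm x) hs0 hs1
      have hres := symm_lt_symm.2 this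
      rwa [unitInterval.symm_symm] at hres
    have hG := main_incr e' h0' h1' hlt' hk
    have hconj : ∀ x : Fin k → I01,
        tauMap k ((fun (x : Fin k → I01) (j : Fin k) => f (x j)) x)
          = (fun (x : Fin k → I01) (j : Fin k) => e' (x j)) (tauMap k x) := by
      intro x
      funext j
      simp only [tauMap, he'app, unitInterval.symm_symm]
    have := polEnt_conj (f := fun (x : Fin k → I01) (j : Fin k) => f (x j))
      (g := fun (x : Fin k → I01) (j : Fin k) => e' (x j))
      (tauMap_invol k) (tauMap_isometry k) hconj (tauMap_image k)
    rw [← this]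
    exact hG
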